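/- Consider n data points (xᵢ, yᵢ) with xᵢ ∈ ℝᵈ, yᵢ ∈ {−1, 1}, and the exponential loss f(θ) = (1/n)·Σᵢ exp(−yᵢ·⟨xᵢ, θ⟩). If the data is separable, i.e. there exists θ* with yᵢ·⟨xᵢ, θ*⟩/‖θ*‖_p ≥ γ_p > 0 for all i, then ‖∇f(θ)‖_q ≥ γ_p·f(θ) for all θ, where 1/p + 1/q = 1. -/

import Mathlib

open scoped BigOperators

noncomputable def lpNorm (p : ENNReal) {ι : Type*} [Fintype ι] (x : ι → ℝ) : ℝ :=
  ‖(WithLp.equiv p (ι → ℝ)).symm x‖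

noncomputable def opNorm (p q : ENNReal) {ι κ : Type*} [Fintype ι] [Fintype κ]
    (A : Matrix ι κ ℝ) : ℝ :=
  sSup {c | ∃ x : κ → ℝ, lpNorm p x ≤ 1 ∧ c = lpNorm q (A.mulVec x)}

noncomputable def dotCLM {n : ℕ} (v : Fin n → ℝ) : (Fin n → ℝ) →L[ℝ] ℝ :=
  LinearMap.toContinuousLinearMap (∑ i, v i • (LinearMap.proj i : (Fin n → ℝ) →ₗ[ℝ] ℝ))

noncomputable def mulVecCLM {m n : ℕ} (M : Matrix (Fin m) (Fin n) ℝ) :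
    (Fin n → ℝ) →L[ℝ] (Fin m → ℝ) :=
  LinearMap.toContinuousLinearMap M.mulVecLin

lemma dotCLM_apply {n : ℕ} (v w : Fin n → ℝ) : dotCLM v w = ∑ i, v i * w i := by
  simp [dotCLM]

lemma abs_le_lpNorm_top {d : ℕ} (v : Fin d → ℝ) (j : Fin d) : |v j| ≤ lpNorm ⊤ v := by
  rw [lpNorm]
  have h : |v j| = ‖(WithLp.equiv ⊤ (Fin d → ℝ)).symm v j‖ := by
    simp [Real.norm_eq_abs]
  rw [h, PiLp.norm_eq_ciSup]
  exact le_ciSup (f := fun i => ‖(WithLp.equiv ⊤ (Fin d → ℝ)).symm v i‖) (Set.Finite.bddAbove (Set.finite_range _)) j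

lemma lpNorm_eq_sum' {d : ℕ} {p : ENNReal} (hp : 0 < p.toReal) (v : Fin d → ℝ) :
    lpNorm p v = (∑ j, |v j| ^ p.toReal) ^ (1 / p.toReal) := by
  rw [lpNorm, PiLp.norm_eq_sum hp]
  simp [Real.norm_eq_abs]

lemma lpNorm_one_eq_sum {d : ℕ} (v : Fin d → ℝ) : lpNorm 1 v = ∑ j, |v j| := by
  rw [lpNorm_eq_sum' (by simp) v]
  simp

lemma holder_abs {d : ℕ} (p q : ENNReal) (hp : 1 ≤ p) (hq : 1 ≤ q)
    (hpq : 1/p + 1/q = 1) (u v : Fin d → ℝ) :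
    ∑ j, |u j| * |v j| ≤ lpNorm q u * lpNorm p v := by
  have hp0 : p ≠ 0 := by intro h; simp [h] at hp
  have hq0 : q ≠ 0 := by intro h; simp [h] at hq
  rcases eq_or_ne p ⊤ with hpt | hpt
  · -- p = ∞, q = 1
    have hq1 : q = 1 := by
      rw [hpt] at hpq
      simp only [one_div, ENNReal.inv_top, zero_add] at hpq
      exact ENNReal.inv_eq_one.mp hpq
    subst hq1 hpt
    rw [lpNorm_one_eq_sum, Finset.sum_mul]
    refine Finset.sum_le_sum fun j _ => ?_
    exact mul_le_mul_of_nonneg_left (abs_le_lpNorm_top v j) (abs_nonneg _)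
  rcases eq_or_ne q ⊤ with hqt | hqt
  · -- q = ∞, p = 1
    have hp1 : p = 1 := by
      rw [hqt] at hpq
      simp only [one_div, ENNReal.inv_top, add_zero] at hpq
      exact ENNReal.inv_eq_one.mp hpq
    subst hp1 hqt
    rw [lpNorm_one_eq_sum, Finset.mul_sum]
    refine Finset.sum_le_sum fun j _ => ?_
    exact mul_le_mul_of_nonneg_right (abs_le_lpNorm_top u j) (abs_nonneg _)
  -- both finite
  have hp1 : (1:ℝ) ≤ p.toReal := by
    simpa using ENNReal.toReal_mono hpt hp
  have hq1 : (1:ℝ) ≤ q.toReal := by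
    simpa using ENNReal.toReal_mono hqt hq
  have hsum : p.toReal⁻¹ + q.toReal⁻¹ = 1 := by
    have h1 : (1/p + 1/q).toReal = (1:ENNReal).toReal := by rw [hpq]
    rw [ENNReal.toReal_add (by simp [hp0]) (by simp [hq0])] at h1
    simpa [one_div, ENNReal.toReal_inv] using h1
  have hplt : 1 < q.toReal := by
    rcases eq_or_lt_of_le hq1 with h | h
    · exfalso
      rw [← h] at hsum
      simp at hsum
      have : 0 < p.toReal := lt_of_lt_of_le zero_lt_one hp1
      linarith
    · exact h
  have hconj : q.toReal.HolderConjugate p.toReal :=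
    Real.holderConjugate_iff.mpr ⟨hplt, by rw [add_comm] at hsum; exact hsum⟩
  have := Real.inner_le_Lp_mul_Lq Finset.univ (fun j => |u j|) (fun j => |v j|) hconj
  simp only [abs_abs] at this
  rw [lpNorm_eq_sum' (lt_of_lt_of_le zero_lt_one hq1) u,
      lpNorm_eq_sum' (lt_of_lt_of_le zero_lt_one hp1) v]
  exact this

lemma hasFDerivAt_explicit {n d : ℕ} (x : Fin n → Fin d → ℝ) (y : Fin n → ℝ) (θ : Fin d → ℝ) :
    HasFDerivAt (fun θ : Fin d → ℝ => (1/(n:ℝ)) * ∑ i, Real.exp (-(y i) * ∑ j, x i j * θ j))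
      ((1/(n:ℝ)) • ∑ i, (Real.exp (-(y i) * ∑ j, x i j * θ j) * (-(y i))) • dotCLM (x i)) θ := by
  have h2 : ∀ i : Fin n, HasFDerivAt (fun θ : Fin d → ℝ => Real.exp (-(y i) * ∑ j, x i j * θ j))
      ((Real.exp (-(y i) * ∑ j, x i j * θ j) * (-(y i))) • dotCLM (x i)) θ := by
    intro i
    have hfun : (fun θ : Fin d → ℝ => ∑ j, x i j * θ j) = dotCLM (x i) := by
      funext w; rw [dotCLM_apply]
    have h1 : HasFDerivAt (fun θ : Fin d → ℝ => ∑ j, x i j * θ j) (dotCLM (x i)) θ := by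
      rw [hfun]; exact (dotCLM (x i)).hasFDerivAt
    have hlin : HasFDerivAt (fun θ : Fin d → ℝ => -(y i) * ∑ j, x i j * θ j)
        ((-(y i)) • dotCLM (x i)) θ := h1.const_mul _
    have := (Real.hasDerivAt_exp (-(y i) * ∑ j, x i j * θ j)).comp_hasFDerivAt θ hlin
    rw [smul_smul] at this
    exact this
  exact (HasFDerivAt.fun_sum fun i _ => h2 i).const_mul _

/-- Exponential loss on separable data satisfies ‖∇f(θ)‖_q ≥ γ_p f(θ). -/
theorem stmt9 {n d : ℕ} (hn : 0 < n) (p q : ENNReal) (hp : 1 ≤ p) (hq : 1 ≤ q)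
    (hpq : 1/p + 1/q = 1)
    (x : Fin n → Fin d → ℝ) (y : Fin n → ℝ) (hy : ∀ i, y i = 1 ∨ y i = -1)
    (f : (Fin d → ℝ) → ℝ)
    (hf : ∀ θ, f θ = (1 / (n : ℝ)) * ∑ i, Real.exp (-(y i) * ∑ j, x i j * θ j))
    (g : (Fin d → ℝ) → (Fin d → ℝ))
    (hgrad : ∀ θ, HasFDerivAt f (dotCLM (g θ)) θ)
    (γ : ℝ) (hγ : 0 < γ) (θstar : Fin d → ℝ)
    (hsep : ∀ i, γ ≤ y i * (∑ j, x i j * θstar j) / lpNorm p θstar) :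
    ∀ θ, γ * f θ ≤ lpNorm q (g θ) := by
  intro θ
  haveI : Fact (1 ≤ p) := ⟨hp⟩
  set s := lpNorm p θstar with hs_def
  have hs0 : 0 ≤ s := by
    rw [hs_def]
    exact norm_nonneg ((WithLp.equiv p (Fin d → ℝ)).symm θstar)
  have hs : 0 < s := by
    rcases lt_or_eq_of_le hs0 with h | h
    · exact h
    · exfalso
      have := hsep ⟨0, hn⟩
      rw [← h, div_zero] at this
      linarith
  have hsep' : ∀ i, γ * s ≤ y i * ∑ j, x i j * θstar j := by
    intro i
    have := hsep i
    rw [le_div_iff₀ hs] at this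
    linarith [this]
  -- identify the gradient
  have hfeq : f = fun θ : Fin d → ℝ => (1/(n:ℝ)) * ∑ i, Real.exp (-(y i) * ∑ j, x i j * θ j) := by
    funext θ'; exact hf θ'
  have hF : HasFDerivAt f
      ((1/(n:ℝ)) • ∑ i, (Real.exp (-(y i) * ∑ j, x i j * θ j) * (-(y i))) • dotCLM (x i)) θ := by
    rw [hfeq]; exact hasFDerivAt_explicit x y θ
  have huniq := (hgrad θ).unique hF
  -- evaluate at θstar
  have heval : ∑ j, g θ j * θstar j
      = (1/(n:ℝ)) * ∑ i, Real.exp (-(y i) * ∑ j, x i j * θ j) * (-(y i))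
          * ∑ j, x i j * θstar j := by
    have := congrArg (fun L : (Fin d → ℝ) →L[ℝ] ℝ => L θstar) huniq
    simp only [ContinuousLinearMap.smul_apply, ContinuousLinearMap.coe_sum',
      Finset.sum_apply, dotCLM_apply, smul_eq_mul] at this
    exact this
  -- bound the directional derivative
  have hbound : ∑ j, g θ j * θstar j ≤ -(γ * s * f θ) := by
    rw [heval, hf θ]
    have h1 : ∀ i : Fin n,
        Real.exp (-(y i) * ∑ j, x i j * θ j) * (-(y i)) * ∑ j, x i j * θstar j
        ≤ -(Real.exp (-(y i) * ∑ j, x i j * θ j) * (γ * s)) := by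
      intro i
      have he : 0 < Real.exp (-(y i) * ∑ j, x i j * θ j) := Real.exp_pos _
      have := hsep' i
      nlinarith
    have h2 := Finset.sum_le_sum (s := Finset.univ) (fun i _ => h1 i)
    have hn' : 0 < (1/(n:ℝ)) := by positivity
    calc (1/(n:ℝ)) * ∑ i, Real.exp (-(y i) * ∑ j, x i j * θ j) * (-(y i))
            * ∑ j, x i j * θstar j
        ≤ (1/(n:ℝ)) * ∑ i, -(Real.exp (-(y i) * ∑ j, x i j * θ j) * (γ * s)) :=
          mul_le_mul_of_nonneg_left h2 hn'.le
      _ = -(γ * s * ((1/(n:ℝ)) * ∑ i, Real.exp (-(y i) * ∑ j, x i j * θ j))) := by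
          rw [Finset.sum_neg_distrib, ← Finset.sum_mul]
          ring
  -- Hölder
  have hhold : -(∑ j, g θ j * θstar j) ≤ lpNorm q (g θ) * s := by
    have h1 : -(∑ j, g θ j * θstar j) ≤ ∑ j, |g θ j| * |θstar j| := by
      rw [← Finset.sum_neg_distrib]
      refine Finset.sum_le_sum fun j _ => ?_
      calc -(g θ j * θstar j) ≤ |g θ j * θstar j| := neg_le_abs _
        _ = |g θ j| * |θstar j| := abs_mul _ _
    exact h1.trans (holder_abs p q hp hq hpq (g θ) θstar)
  have : γ * s * f θ ≤ lpNorm q (g θ) * s := by linarith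
  have := (mul_le_mul_iff_of_pos_right hs).mp (by linarith [this] : γ * f θ * s ≤ lpNorm q (g θ) * s)
  exact this
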